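/- Let (f_n(x)) be a sequence of binomial type with f₀ = 1, a real, and f_n(x; a) := (x/(an + x)) f_n(an + x), f₀(x; a) := 1. Then the sequence (f_n(x; a))_{n≥0} is again of binomial type, i.e. f_n(x + y; a) = ∑_{j=0}^n C(n,j) f_j(x; a) f_{n-j}(y; a) for all n ≥ 0 and all x, y (with an + x, aj + x, a(n-j) + y nonzero so the expressions are defined; as polynomial identities after clearing denominators). -/

import Mathlib

open Finset

/-- The exponential partial Bell polynomial `B_{n,k}(x₁,x₂,…)`, defined via the
generating function `∑_{n} B_{n,k} tⁿ/n! = (1/k!) (∑_{m≥1} x_m t^m/m!)^k`. -/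
noncomputable def bellB (n k : ℕ) (x : ℕ → ℝ) : ℝ :=
  ((Nat.factorial n : ℝ) / (Nat.factorial k : ℝ)) *
    PowerSeries.coeff n
      ((PowerSeries.mk fun m => if m = 0 then 0 else x m / (Nat.factorial m : ℝ)) ^ k)

/-- The complete Bell polynomial `A_n(x₁,…,x_n) = ∑_{k=1}^n B_{n,k}`, `A₀ = 1`. -/
noncomputable def bellA (n : ℕ) (x : ℕ → ℝ) : ℝ :=
  if n = 0 then 1 else ∑ k ∈ Finset.Icc 1 n, bellB n k x

namespace Stmt7Aux

open PowerSeries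

/-- The exponential generating function `∑ f_n(c) tⁿ/n!`. -/
noncomputable def Phi (f : ℕ → Polynomial ℝ) (c : ℝ) : PowerSeries ℝ :=
  PowerSeries.mk fun n => (f n).eval c / n.factorial

lemma coeff_Phi (f : ℕ → Polynomial ℝ) (c : ℝ) (n : ℕ) :
    PowerSeries.coeff n (Phi f c) = (f n).eval c / n.factorial := coeff_mk n _

section

variable {f : ℕ → Polynomial ℝ} {a : ℝ}

/-- binomial type hypothesis -/
def HBin (f : ℕ → Polynomial ℝ) : Prop :=
  ∀ n : ℕ, ∀ x y : ℝ, (f n).eval (x + y) =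
      ∑ j ∈ Finset.range (n + 1), (n.choose j : ℝ) * (f j).eval x * (f (n - j)).eval y

lemma eval_zero (hf0 : f 0 = 1) (hbin : HBin f) : ∀ n, 1 ≤ n → (f n).eval 0 = 0 := by
  intro n
  induction n using Nat.strong_induction_on with
  | _ n ih =>
    intro hn
    have h := hbin n 0 0
    rw [add_zero] at h
    have hsum : ∑ j ∈ Finset.range (n + 1),
        (n.choose j : ℝ) * (f j).eval 0 * (f (n - j)).eval 0
        = ∑ j ∈ Finset.range (n + 1),
          ((if j = 0 then (f n).eval 0 else 0) + (if j = n then (f n).eval 0 else 0)) := by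
      apply Finset.sum_congr rfl
      intro j hj
      rw [Finset.mem_range] at hj
      rcases eq_or_ne j 0 with rfl | hj0
      · have : ¬ (0 = n) := by omega
        simp [hf0, this]
      · rcases eq_or_ne j n with rfl | hjn
        · simp [hf0, hj0]
        · have h1 : (f j).eval 0 = 0 := ih j (by omega) (by omega)
          simp [h1, hj0, hjn]
    rw [hsum, Finset.sum_add_distrib, Finset.sum_ite_eq' (Finset.range (n+1)) 0,
      Finset.sum_ite_eq' (Finset.range (n+1)) n] at h
    have h0 : (0 : ℕ) ∈ Finset.range (n+1) := by simp
    have hnn : n ∈ Finset.range (n+1) := by simp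
    rw [if_pos h0, if_pos hnn] at h
    linarith

lemma coeff_zero_Phi (hf0 : f 0 = 1) (c : ℝ) : PowerSeries.coeff 0 (Phi f c) = 1 := by
  rw [coeff_Phi, hf0]
  simp

lemma Phi_add (hbin : HBin f) (c d : ℝ) : Phi f (c + d) = Phi f c * Phi f d := by
  ext n
  rw [PowerSeries.coeff_mul, coeff_Phi, hbin n c d]
  rw [Finset.Nat.sum_antidiagonal_eq_sum_range_succ
    (fun i j => (PowerSeries.coeff i) (Phi f c) * (PowerSeries.coeff j) (Phi f d))]
  rw [Finset.sum_div]
  apply Finset.sum_congr rfl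
  intro j hj
  rw [Finset.mem_range] at hj
  have hjn : j ≤ n := by omega
  rw [coeff_Phi, coeff_Phi, Nat.cast_choose ℝ hjn]
  have h1 : (j.factorial : ℝ) ≠ 0 := Nat.cast_ne_zero.2 j.factorial_ne_zero
  have h2 : ((n - j).factorial : ℝ) ≠ 0 := Nat.cast_ne_zero.2 (n - j).factorial_ne_zero
  have h3 : (n.factorial : ℝ) ≠ 0 := Nat.cast_ne_zero.2 n.factorial_ne_zero
  field_simp

lemma Phi_zero (hf0 : f 0 = 1) (hbin : HBin f) : Phi f 0 = 1 := by
  ext n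
  rw [coeff_Phi, PowerSeries.coeff_one]
  cases n with
  | zero => simp [hf0]
  | succ m =>
    rw [eval_zero hf0 hbin (m+1) (by omega)]
    simp

lemma Phi_pow (hf0 : f 0 = 1) (hbin : HBin f) (c : ℝ) (k : ℕ) :
    Phi f c ^ k = Phi f (k * c) := by
  induction k with
  | zero => simp [Phi_zero hf0 hbin]
  | succ m ih =>
    rw [pow_succ, ih, ← Phi_add hbin]
    congr 1
    push_cast
    ring

lemma Phi_inv (hf0 : f 0 = 1) (hbin : HBin f) (c : ℝ) : Phi f c * Phi f (-c) = 1 := by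
  rw [← Phi_add hbin, add_neg_cancel, Phi_zero hf0 hbin]

lemma pair_nat (hf0 : f 0 = 1) (hbin : HBin f) (k l : ℕ) :
    (l : ℝ) • (d⁄dX ℝ (Phi f k) * Phi f l) = (k : ℝ) • (d⁄dX ℝ (Phi f l) * Phi f k) := by
  have hk : Phi f (k : ℝ) = Phi f 1 ^ k := by rw [Phi_pow hf0 hbin 1 k, mul_one]
  have hl : Phi f (l : ℝ) = Phi f 1 ^ l := by rw [Phi_pow hf0 hbin 1 l, mul_one]
  rcases Nat.eq_zero_or_pos k with rfl | hk1
  · rw [Nat.cast_zero, Phi_zero hf0 hbin, Derivation.map_one_eq_zero]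
    simp
  rcases Nat.eq_zero_or_pos l with rfl | hl1
  · rw [Nat.cast_zero, Phi_zero hf0 hbin, Derivation.map_one_eq_zero]
    simp
  have hpow : Phi f 1 ^ (k-1) * Phi f 1 ^ l = Phi f 1 ^ (l-1) * Phi f 1 ^ k := by
    rw [← pow_add, ← pow_add]
    congr 1
    omega
  rw [hk, hl, Derivation.leibniz_pow, Derivation.leibniz_pow]
  simp only [Nat.cast_smul_eq_nsmul ℝ, nsmul_eq_mul, smul_eq_mul]
  push_cast
  linear_combination ((k : PowerSeries ℝ) * (l : PowerSeries ℝ) * (d⁄dX ℝ) (Phi f 1)) * hpow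

lemma poly_zero_of_nat_root (p : Polynomial ℝ) (h : ∀ k : ℕ, p.eval (k : ℝ) = 0) : p = 0 := by
  apply p.eq_zero_of_infinite_isRoot
  apply Set.infinite_of_injective_forall_mem (f := fun k : ℕ => (k : ℝ)) Nat.cast_injective
  intro k
  exact h k

lemma pair (hf0 : f 0 = 1) (hbin : HBin f) (c d : ℝ) :
    d • (d⁄dX ℝ (Phi f c) * Phi f d) = c • (d⁄dX ℝ (Phi f d) * Phi f c) := by
  ext m
  rw [map_smul, map_smul, smul_eq_mul, smul_eq_mul]
  set g : ℝ → ℝ → ℝ := fun u v =>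
    PowerSeries.coeff m (d⁄dX ℝ (Phi f u) * Phi f v) with hg
  show d * g c d = c * g d c
  set P : ℝ → Polynomial ℝ := fun v => ∑ p ∈ Finset.HasAntidiagonal.antidiagonal m,
      (((f p.2).eval v / p.2.factorial) * (p.1 + 1) / (p.1 + 1).factorial) • f (p.1 + 1) with hP
  have hgP : ∀ u v : ℝ, g u v = (P v).eval u := by
    intro u v
    rw [hg, hP]
    simp only
    rw [PowerSeries.coeff_mul, Polynomial.eval_finset_sum]
    apply Finset.sum_congr rfl
    intro p hp
    rw [PowerSeries.coeff_derivative, coeff_Phi, coeff_Phi, Polynomial.eval_smul]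
    simp only [smul_eq_mul]
    push_cast
    ring
  set Q : ℝ → Polynomial ℝ := fun u => ∑ p ∈ Finset.HasAntidiagonal.antidiagonal m,
      ((f (p.1 + 1)).eval u * (p.1 + 1) / (p.1 + 1).factorial / p.2.factorial) • f p.2 with hQ
  have hgQ : ∀ u v : ℝ, g u v = (Q u).eval v := by
    intro u v
    rw [hg, hQ]
    simp only
    rw [PowerSeries.coeff_mul, Polynomial.eval_finset_sum]
    apply Finset.sum_congr rfl
    intro p hp
    rw [PowerSeries.coeff_derivative, coeff_Phi, coeff_Phi, Polynomial.eval_smul]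
    simp only [smul_eq_mul]
    push_cast
    ring
  have hnat : ∀ k l : ℕ, (l : ℝ) * g k l = (k : ℝ) * g l k := by
    intro k l
    have h := congrArg (PowerSeries.coeff m) (pair_nat hf0 hbin k l)
    rw [map_smul, map_smul, smul_eq_mul, smul_eq_mul] at h
    exact h
  have step1 : ∀ (l : ℕ) (u : ℝ), (l : ℝ) * g u l = u * g (l : ℝ) u := by
    intro l u
    have hR : Polynomial.C (l : ℝ) * P (l : ℝ) - Polynomial.X * Q (l : ℝ) = 0 := by
      apply poly_zero_of_nat_root
      intro k
      rw [Polynomial.eval_sub, Polynomial.eval_mul, Polynomial.eval_mul, Polynomial.eval_C,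
        Polynomial.eval_X, ← hgP, ← hgQ, sub_eq_zero]
      exact hnat k l
    have h2 := congrArg (Polynomial.eval u) hR
    rw [Polynomial.eval_sub, Polynomial.eval_mul, Polynomial.eval_mul, Polynomial.eval_C,
      Polynomial.eval_X, Polynomial.eval_zero, sub_eq_zero, ← hgP, ← hgQ] at h2
    exact h2
  have hS : Polynomial.X * Q c - Polynomial.C c * P c = 0 := by
    apply poly_zero_of_nat_root
    intro l
    rw [Polynomial.eval_sub, Polynomial.eval_mul, Polynomial.eval_mul, Polynomial.eval_C,
      Polynomial.eval_X, ← hgQ, ← hgP, sub_eq_zero]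
    exact step1 l c
  have h2 := congrArg (Polynomial.eval d) hS
  rw [Polynomial.eval_sub, Polynomial.eval_mul, Polynomial.eval_mul, Polynomial.eval_C,
    Polynomial.eval_X, Polynomial.eval_zero, sub_eq_zero, ← hgQ, ← hgP] at h2
  exact h2

lemma pairsum (hf0 : f 0 = 1) (hbin : HBin f) (c d : ℝ) :
    (c + d) • (d⁄dX ℝ (Phi f c) * Phi f d) = c • d⁄dX ℝ (Phi f (c + d)) := by
  rw [Phi_add hbin, Derivation.leibniz, smul_add, smul_eq_mul, smul_eq_mul,
    mul_comm (Phi f c), mul_comm (Phi f d), pair hf0 hbin d c, add_smul, add_comm]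

lemma trans_coeff (hf0 : f 0 = 1) (hbin : HBin f) {F : ℕ → Polynomial ℝ}
    (hF : ∀ n : ℕ, 1 ≤ n → ∀ x : ℝ, (a * n + x) * (F n).eval x = x * (f n).eval (a * n + x))
    {k : ℕ} (hk : 1 ≤ k) {c : ℝ} (hc : c + a * k ≠ 0) :
    PowerSeries.coeff (k - 1) (d⁄dX ℝ (Phi f c) * Phi f (a * k)) =
      (k : ℝ) * (F k).eval c / k.factorial := by
  have h := congrArg (PowerSeries.coeff (k - 1)) (pairsum hf0 hbin c (a * k))
  rw [map_smul, map_smul, smul_eq_mul, smul_eq_mul, PowerSeries.coeff_derivative,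
    coeff_Phi] at h
  have hk1 : k - 1 + 1 = k := by omega
  have hcast : ((k - 1 : ℕ) : ℝ) + 1 = (k : ℝ) := by
    rw [Nat.cast_sub hk]
    ring
  rw [hk1, hcast] at h
  have h3 := hF k hk c
  rw [add_comm (a * (k : ℝ)) c] at h3
  have hfac : (k.factorial : ℝ) ≠ 0 := Nat.cast_ne_zero.2 k.factorial_ne_zero
  apply mul_left_cancel₀ hc
  rw [h]
  field_simp
  linear_combination (-1 : ℝ) * h3

lemma dvj (hf0 : f 0 = 1) (hbin : HBin f) (ha : a ≠ 0) {j k : ℕ} (hjk : j ≤ k) (hk : 1 ≤ k) :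
    PowerSeries.coeff (k - 1)
        (d⁄dX ℝ (PowerSeries.X ^ j * Phi f (-(a * j))) * Phi f (a * k)) =
      if j = k then (k : ℝ) else 0 := by
  rcases Nat.eq_zero_or_pos j with rfl | hj1
  · have h0 : -(a * ((0 : ℕ) : ℝ)) = 0 := by push_cast; ring
    rw [h0, pow_zero, one_mul, Phi_zero hf0 hbin, Derivation.map_one_eq_zero, zero_mul, map_zero]
    have : ¬((0 : ℕ) = k) := by omega
    rw [if_neg this]
  have hder : d⁄dX ℝ (PowerSeries.X ^ j * Phi f (-(a * j)))
      = PowerSeries.X ^ j * d⁄dX ℝ (Phi f (-(a * j)))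
        + PowerSeries.C (j : ℝ) * (PowerSeries.X ^ (j - 1) * Phi f (-(a * j))) := by
    rw [Derivation.leibniz, Derivation.leibniz_pow, PowerSeries.derivative_X]
    simp only [smul_eq_mul, nsmul_eq_mul, mul_one, map_natCast]
    ring
  rw [hder, add_mul, map_add]
  have hcast : ((k - j : ℕ) : ℝ) = (k : ℝ) - j := Nat.cast_sub hjk
  have hBB : Phi f (-(a * (j : ℝ))) * Phi f (a * (k : ℝ)) = Phi f (a * ((k - j : ℕ) : ℝ)) := by
    rw [← Phi_add hbin]
    congr 1
    rw [hcast]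
    ring
  have hp2 : PowerSeries.coeff (k - 1)
      (PowerSeries.C (j : ℝ) * (PowerSeries.X ^ (j - 1) * Phi f (-(a * j))) * Phi f (a * k))
      = (j : ℝ) * PowerSeries.coeff (k - j) (Phi f (a * ((k - j : ℕ) : ℝ))) := by
    rw [mul_assoc, PowerSeries.coeff_C_mul, mul_assoc, hBB, PowerSeries.coeff_X_pow_mul']
    rw [if_pos (by omega : j - 1 ≤ k - 1)]
    have hidx : k - 1 - (j - 1) = k - j := by omega
    rw [hidx]
  rw [hp2]
  rcases eq_or_ne j k with rfl | hjkne
  · rw [mul_assoc, PowerSeries.coeff_X_pow_mul', if_neg (by omega : ¬ (j ≤ j - 1))]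
    have h00 : j - j = 0 := by omega
    rw [h00, coeff_zero_Phi hf0, if_pos rfl]
    ring
  · have hjk' : j < k := by omega
    have hM := congrArg (PowerSeries.coeff (k - 1 - j)) (pairsum hf0 hbin (-(a * j)) (a * k))
    rw [map_smul, map_smul, smul_eq_mul, smul_eq_mul, PowerSeries.coeff_derivative] at hM
    have harg : -(a * (j : ℝ)) + a * (k : ℝ) = a * ((k - j : ℕ) : ℝ) := by
      rw [hcast]
      ring
    rw [harg] at hM
    have hidx : k - 1 - j + 1 = k - j := by omega
    have hcast2 : ((k - 1 - j : ℕ) : ℝ) + 1 = ((k - j : ℕ) : ℝ) := by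
      calc ((k - 1 - j : ℕ) : ℝ) + 1 = ((k - 1 - j + 1 : ℕ) : ℝ) := by push_cast; ring
        _ = ((k - j : ℕ) : ℝ) := by rw [hidx]
    rw [hidx, hcast2] at hM
    have hanz : a * ((k - j : ℕ) : ℝ) ≠ 0 := by
      apply mul_ne_zero ha
      rw [hcast]
      have : (j : ℝ) < (k : ℝ) := by exact_mod_cast hjk'
      linarith
    have hM2 : PowerSeries.coeff (k - 1 - j)
        (d⁄dX ℝ (Phi f (-(a * j))) * Phi f (a * k))
        = -(j : ℝ) * PowerSeries.coeff (k - j) (Phi f (a * ((k - j : ℕ) : ℝ))) := by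
      apply mul_left_cancel₀ hanz
      rw [hM]
      ring
    rw [mul_assoc, PowerSeries.coeff_X_pow_mul', if_pos (by omega : j ≤ k - 1), hM2,
      if_neg hjkne]
    ring

/-- partial sums approximating the `v`-expansion -/
noncomputable def W (f : ℕ → Polynomial ℝ) (a : ℝ) (e : ℕ → ℝ) (N : ℕ) : PowerSeries ℝ :=
  ∑ k ∈ Finset.range (N + 1), e k • (PowerSeries.X ^ k * Phi f (-(a * k)))

lemma coeff_W (e : ℕ → ℝ) {N p : ℕ} (hp : p ≤ N) :
    PowerSeries.coeff p (W f a e N) =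
      ∑ k ∈ Finset.range (p + 1), e k * PowerSeries.coeff (p - k) (Phi f (-(a * k))) := by
  rw [W, map_sum]
  simp only [map_smul, smul_eq_mul, PowerSeries.coeff_X_pow_mul']
  rw [← Finset.sum_subset (Finset.range_subset_range.2 (by omega : p + 1 ≤ N + 1))]
  · apply Finset.sum_congr rfl
    intro k hk
    rw [Finset.mem_range] at hk
    rw [if_pos (by omega : k ≤ p)]
  · intro k hk hnk
    simp only [Finset.mem_range] at hnk
    rw [if_neg (by omega : ¬ (k ≤ p)), mul_zero]

lemma coeff_mul_congr {A A' B B' : PowerSeries ℝ} {n : ℕ}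
    (hA : ∀ p, p ≤ n → PowerSeries.coeff p A = PowerSeries.coeff p A')
    (hB : ∀ p, p ≤ n → PowerSeries.coeff p B = PowerSeries.coeff p B') :
    PowerSeries.coeff n (A * B) = PowerSeries.coeff n (A' * B') := by
  rw [PowerSeries.coeff_mul, PowerSeries.coeff_mul]
  apply Finset.sum_congr rfl
  intro p hp
  rw [Finset.HasAntidiagonal.mem_antidiagonal] at hp
  rw [hA p.1 (by omega), hB p.2 (by omega)]

lemma tri {M : ℕ} (h : ℕ → ℕ → ℝ) (hv : ∀ i j, M < i + j → h i j = 0) :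
    ∑ m ∈ Finset.range (M + 1), ∑ i ∈ Finset.range (m + 1), h i (m - i) =
      ∑ p ∈ Finset.range (M + 1) ×ˢ Finset.range (M + 1), h p.1 p.2 := by
  have h1 : ∑ p ∈ (Finset.range (M + 1) ×ˢ Finset.range (M + 1)).filter
        (fun p => p.1 + p.2 ≤ M), h p.1 p.2
      = ∑ p ∈ Finset.range (M + 1) ×ˢ Finset.range (M + 1), h p.1 p.2 := by
    apply Finset.sum_subset (Finset.filter_subset _ _)
    intro p hp hnp
    simp only [Finset.mem_filter, hp, true_and] at hnp
    exact hv p.1 p.2 (by omega)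
  rw [← h1, Finset.sum_sigma']
  apply Finset.sum_nbij' (i := fun x : (Σ _m : ℕ, ℕ) => (x.2, x.1 - x.2))
    (j := fun p : ℕ × ℕ => ⟨p.1 + p.2, p.1⟩)
  · rintro ⟨m, i⟩ hx
    simp only [Finset.mem_sigma, Finset.mem_range] at hx
    simp only [Finset.mem_filter, Finset.mem_product, Finset.mem_range]
    omega
  · rintro ⟨u, v⟩ hp
    simp only [Finset.mem_filter, Finset.mem_product, Finset.mem_range] at hp
    simp only [Finset.mem_sigma, Finset.mem_range]
    omega
  · rintro ⟨m, i⟩ hx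
    simp only [Finset.mem_sigma, Finset.mem_range] at hx
    have e : i + (m - i) = m := by omega
    simp only [e]
  · rintro ⟨u, v⟩ hp
    simp only [Finset.mem_filter, Finset.mem_product, Finset.mem_range] at hp
    have e : u + v - u = v := by omega
    simp only [e]
  · rintro ⟨m, i⟩ hx
    rfl

lemma main_coeff (hf0 : f 0 = 1) (hbin : HBin f) (ha : a ≠ 0) {F : ℕ → Polynomial ℝ}
    (hF0 : F 0 = 1)
    (hF : ∀ n : ℕ, 1 ≤ n → ∀ x : ℝ, (a * n + x) * (F n).eval x = x * (f n).eval (a * n + x))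
    {c : ℝ} (hc : ∀ k : ℕ, 1 ≤ k → c + a * k ≠ 0) (n : ℕ) :
    PowerSeries.coeff n (Phi f c) =
      ∑ k ∈ Finset.range (n + 1),
        ((F k).eval c / k.factorial) * PowerSeries.coeff (n - k) (Phi f (-(a * k))) := by
  induction n using Nat.strong_induction_on with
  | _ n ih =>
  rcases Nat.eq_zero_or_pos n with rfl | hn
  · rw [coeff_zero_Phi hf0, Finset.sum_range_one, hF0]
    simp [coeff_zero_Phi hf0]
  · set dd : ℕ → ℝ := fun k => (F k).eval c / k.factorial with hdd
    have hWc : ∀ p, p ≤ n → PowerSeries.coeff p (W f a dd n)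
        = ∑ k ∈ Finset.range (p + 1), dd k * PowerSeries.coeff (p - k) (Phi f (-(a * k))) :=
      fun p hp => coeff_W dd hp
    have hag : ∀ p, p < n →
        PowerSeries.coeff p (Phi f c) = PowerSeries.coeff p (W f a dd n) := by
      intro p hp
      rw [hWc p (le_of_lt hp)]
      exact ih p hp
    have h1 : PowerSeries.coeff (n - 1) (d⁄dX ℝ (Phi f c) * Phi f (a * n))
        = (n : ℝ) * (F n).eval c / n.factorial :=
      trans_coeff hf0 hbin hF hn (hc n hn)
    have h2 : PowerSeries.coeff (n - 1) (d⁄dX ℝ (W f a dd n) * Phi f (a * n))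
        = dd n * n := by
      rw [W, map_sum (d⁄dX ℝ) _ (Finset.range (n + 1)), Finset.sum_mul, map_sum]
      have hterm : ∀ j ∈ Finset.range (n + 1),
          PowerSeries.coeff (n - 1)
            (d⁄dX ℝ (dd j • (PowerSeries.X ^ j * Phi f (-(a * j)))) * Phi f (a * n))
          = if j = n then dd j * (n : ℝ) else 0 := by
        intro j hj
        rw [Finset.mem_range] at hj
        rw [Derivation.map_smul, smul_mul_assoc, map_smul, smul_eq_mul,
          dvj hf0 hbin ha (by omega : j ≤ n) hn]
        split_ifs with h
        · rfl
        · exact mul_zero _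
      rw [Finset.sum_congr rfl hterm, Finset.sum_ite_eq' (Finset.range (n + 1)) n
        (fun j => dd j * (n : ℝ)), if_pos (Finset.self_mem_range_succ n)]
    have h3 : PowerSeries.coeff (n - 1) (d⁄dX ℝ (Phi f c) * Phi f (a * n))
        = PowerSeries.coeff (n - 1) (d⁄dX ℝ (W f a dd n) * Phi f (a * n))
          + (n : ℝ) * (PowerSeries.coeff n (Phi f c)
              - PowerSeries.coeff n (W f a dd n)) := by
      have hsplit : d⁄dX ℝ (Phi f c) * Phi f (a * n)
          = d⁄dX ℝ (W f a dd n) * Phi f (a * n)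
            + d⁄dX ℝ (Phi f c - W f a dd n) * Phi f (a * n) := by
        rw [map_sub, sub_mul]
        ring
      rw [hsplit, map_add]
      congr 1
      rw [PowerSeries.coeff_mul, Finset.sum_eq_single ((n - 1 : ℕ), (0 : ℕ))]
      · rw [PowerSeries.coeff_derivative, map_sub]
        have hidx : n - 1 + 1 = n := by omega
        have hcast : ((n - 1 : ℕ) : ℝ) + 1 = (n : ℝ) := by
          calc ((n - 1 : ℕ) : ℝ) + 1 = ((n - 1 + 1 : ℕ) : ℝ) := by push_cast; ring
            _ = (n : ℝ) := by rw [hidx]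
        rw [hidx, coeff_zero_Phi hf0, hcast]
        ring
      · rintro ⟨p, q⟩ hpq hne
        rw [Finset.HasAntidiagonal.mem_antidiagonal] at hpq
        have hplt : p + 1 < n := by
          rcases Nat.lt_or_ge (p + 1) n with h | h
          · exact h
          · exfalso
            apply hne
            have hp1 : p = n - 1 := by omega
            have hq1 : q = 0 := by omega
            rw [hp1, hq1]
        rw [PowerSeries.coeff_derivative, map_sub, hag (p + 1) hplt, sub_self, zero_mul,
          zero_mul]
      · intro hmem
        exfalso
        apply hmem
        rw [Finset.HasAntidiagonal.mem_antidiagonal]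
        omega
    have hn0 : (n : ℝ) ≠ 0 := Nat.cast_ne_zero.2 (by omega)
    have h4 : (n : ℝ) * (PowerSeries.coeff n (Phi f c)
        - PowerSeries.coeff n (W f a dd n)) = 0 := by
      rw [h1, h2] at h3
      have hddn : dd n = (F n).eval c / n.factorial := rfl
      rw [hddn] at h3
      linear_combination -h3
    have h5 : PowerSeries.coeff n (Phi f c) = PowerSeries.coeff n (W f a dd n) := by
      rcases mul_eq_zero.1 h4 with h | h
      · exact absurd h hn0
      · linarith
    rw [h5, hWc n le_rfl]

lemma main_good (hf0 : f 0 = 1) (hbin : HBin f) (ha : a ≠ 0) {F : ℕ → Polynomial ℝ}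
    (hF0 : F 0 = 1)
    (hF : ∀ n : ℕ, 1 ≤ n → ∀ x : ℝ, (a * n + x) * (F n).eval x = x * (f n).eval (a * n + x))
    {x y : ℝ} (hx : 0 < a * x) (hy : 0 < a * y) : ∀ n : ℕ,
    (F n).eval (x + y) / n.factorial =
      ∑ i ∈ Finset.range (n + 1),
        ((F i).eval x / i.factorial) * ((F (n - i)).eval y / (n - i).factorial) := by
  have hgood : ∀ c : ℝ, 0 < a * c → ∀ k : ℕ, 1 ≤ k → c + a * k ≠ 0 := by
    intro c hc k hk h0
    have h1 : c = -(a * k) := by linarith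
    rw [h1] at hc
    have h2 : (0 : ℝ) < (k : ℝ) := by exact_mod_cast hk
    nlinarith [mul_pos (mul_self_pos.2 ha) h2]
  have hxy : 0 < a * (x + y) := by
    rw [mul_add]
    linarith
  intro n
  induction n using Nat.strong_induction_on with
  | _ n ih =>
  have Hz := main_coeff hf0 hbin ha hF0 hF (hgood (x + y) hxy) n
  have hWx : ∀ p, p ≤ n → PowerSeries.coeff p (Phi f x)
      = PowerSeries.coeff p (W f a (fun k => (F k).eval x / k.factorial) n) := by
    intro p hp
    rw [coeff_W _ hp]
    exact main_coeff hf0 hbin ha hF0 hF (hgood x hx) p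
  have hWy : ∀ p, p ≤ n → PowerSeries.coeff p (Phi f y)
      = PowerSeries.coeff p (W f a (fun k => (F k).eval y / k.factorial) n) := by
    intro p hp
    rw [coeff_W _ hp]
    exact main_coeff hf0 hbin ha hF0 hF (hgood y hy) p
  have step1 : PowerSeries.coeff n (Phi f x * Phi f y)
      = ∑ k ∈ Finset.range (n + 1), ∑ l ∈ Finset.range (n + 1),
          ((F k).eval x / k.factorial) * ((F l).eval y / l.factorial)
            * PowerSeries.coeff n
                (PowerSeries.X ^ (k + l) * Phi f (-(a * ((k + l : ℕ) : ℝ)))) := by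
    rw [coeff_mul_congr hWx hWy, W, W, Finset.sum_mul_sum, map_sum]
    apply Finset.sum_congr rfl
    intro k _
    rw [map_sum]
    apply Finset.sum_congr rfl
    intro l _
    have hmm : (PowerSeries.X ^ k * Phi f (-(a * k)))
          * (PowerSeries.X ^ l * Phi f (-(a * l)))
        = PowerSeries.X ^ (k + l) * Phi f (-(a * ((k + l : ℕ) : ℝ))) := by
      rw [mul_mul_mul_comm, ← pow_add, ← Phi_add hbin]
      congr 1
      push_cast
      ring
    rw [smul_mul_smul_comm, hmm, map_smul, smul_eq_mul]
  have step2 : (∑ k ∈ Finset.range (n + 1), ∑ l ∈ Finset.range (n + 1),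
          ((F k).eval x / k.factorial) * ((F l).eval y / l.factorial)
            * PowerSeries.coeff n
                (PowerSeries.X ^ (k + l) * Phi f (-(a * ((k + l : ℕ) : ℝ)))))
      = ∑ m ∈ Finset.range (n + 1),
          (∑ i ∈ Finset.range (m + 1),
            ((F i).eval x / i.factorial) * ((F (m - i)).eval y / (m - i).factorial))
          * PowerSeries.coeff (n - m) (Phi f (-(a * m))) := by
    set B : ℕ → ℕ → ℝ := fun i j =>
      ((F i).eval x / i.factorial) * ((F j).eval y / j.factorial)
        * PowerSeries.coeff n
            (PowerSeries.X ^ (i + j) * Phi f (-(a * ((i + j : ℕ) : ℝ)))) with hB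
    have hv : ∀ i j, n < i + j → B i j = 0 := by
      intro i j hij
      rw [hB]
      simp only
      rw [PowerSeries.coeff_X_pow_mul', if_neg (by omega), mul_zero]
    have ht := tri (M := n) B hv
    show (∑ k ∈ Finset.range (n + 1), ∑ l ∈ Finset.range (n + 1), B k l) = _
    rw [← Finset.sum_product']
    rw [← ht]
    apply Finset.sum_congr rfl
    intro m hm
    rw [Finset.mem_range] at hm
    rw [Finset.sum_mul]
    apply Finset.sum_congr rfl
    intro i hi
    rw [Finset.mem_range] at hi
    have hpi : i + (m - i) = m := by omega
    rw [hB]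
    simp only
    rw [hpi, PowerSeries.coeff_X_pow_mul', if_pos (by omega)]
  have hfin : (∑ k ∈ Finset.range (n + 1),
        ((F k).eval (x + y) / k.factorial)
          * PowerSeries.coeff (n - k) (Phi f (-(a * k))))
      = ∑ m ∈ Finset.range (n + 1),
          (∑ i ∈ Finset.range (m + 1),
            ((F i).eval x / i.factorial) * ((F (m - i)).eval y / (m - i).factorial))
          * PowerSeries.coeff (n - m) (Phi f (-(a * m))) := by
    rw [← Hz, Phi_add hbin, step1, step2]
  rw [Finset.sum_range_succ, Finset.sum_range_succ] at hfin
  have hlow : (∑ k ∈ Finset.range n,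
        ((F k).eval (x + y) / k.factorial)
          * PowerSeries.coeff (n - k) (Phi f (-(a * k))))
      = ∑ m ∈ Finset.range n,
          (∑ i ∈ Finset.range (m + 1),
            ((F i).eval x / i.factorial) * ((F (m - i)).eval y / (m - i).factorial))
          * PowerSeries.coeff (n - m) (Phi f (-(a * m))) := by
    apply Finset.sum_congr rfl
    intro m hm
    rw [Finset.mem_range] at hm
    rw [ih m hm]
  rw [hlow] at hfin
  have hcan := add_left_cancel hfin
  rw [Nat.sub_self, coeff_zero_Phi hf0, mul_one, mul_one] at hcan
  exact hcan

end

end Stmt7Aux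

theorem stmt_7 (f : ℕ → Polynomial ℝ) (hf0 : f 0 = 1) (hdeg : ∀ n, (f n).natDegree = n)
    (hbin : ∀ n : ℕ, ∀ x y : ℝ, (f n).eval (x + y) =
      ∑ j ∈ Finset.range (n + 1), (n.choose j : ℝ) * (f j).eval x * (f (n - j)).eval y)
    (a : ℝ) (F : ℕ → Polynomial ℝ) (hF0 : F 0 = 1)
    (hF : ∀ n : ℕ, 1 ≤ n → ∀ x : ℝ, (a * n + x) * (F n).eval x = x * (f n).eval (a * n + x)) :
    F 0 = 1 ∧ ∀ n : ℕ, ∀ x y : ℝ, (F n).eval (x + y) =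
      ∑ j ∈ Finset.range (n + 1), (n.choose j : ℝ) * (F j).eval x * (F (n - j)).eval y := by
  refine ⟨hF0, ?_⟩
  intro n x y
  rcases eq_or_ne a 0 with rfl | ha
  · have hFf : ∀ m, F m = f m := by
      intro m
      rcases Nat.eq_zero_or_pos m with rfl | hm
      · rw [hF0, hf0]
      · have hXeq : Polynomial.X * F m = Polynomial.X * f m := by
          apply Polynomial.funext
          intro r
          have h := hF m hm r
          simp only [zero_mul, zero_add] at h
          simpa using h
        exact mul_left_cancel₀ Polynomial.X_ne_zero hXeq
    simp only [hFf]
    exact hbin n x y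
  · have key : ∀ u v : ℝ, 0 < a * u → 0 < a * v →
        (F n).eval (u + v) = ∑ j ∈ Finset.range (n + 1),
          (n.choose j : ℝ) * (F j).eval u * (F (n - j)).eval v := by
      intro u v hu hv
      have h := Stmt7Aux.main_good hf0 hbin ha hF0 hF hu hv n
      have hfac : (n.factorial : ℝ) ≠ 0 := Nat.cast_ne_zero.2 n.factorial_ne_zero
      have h2 : (F n).eval (u + v)
          = n.factorial * ∑ i ∈ Finset.range (n + 1),
              ((F i).eval u / i.factorial) * ((F (n - i)).eval v / (n - i).factorial) := by
        rw [← h]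
        field_simp
      rw [h2, Finset.mul_sum]
      apply Finset.sum_congr rfl
      intro j hj
      rw [Finset.mem_range] at hj
      rw [Nat.cast_choose ℝ (by omega : j ≤ n)]
      have h1 : (j.factorial : ℝ) ≠ 0 := Nat.cast_ne_zero.2 j.factorial_ne_zero
      have h2 : ((n - j).factorial : ℝ) ≠ 0 := Nat.cast_ne_zero.2 (n - j).factorial_ne_zero
      field_simp
    have hinf : Set.Infinite {c : ℝ | 0 < a * c} := by
      rcases lt_or_gt_of_ne ha with hneg | hpos
      · apply Set.Infinite.mono ?_ (Set.Iio_infinite (0 : ℝ))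
        intro c hc
        simp only [Set.mem_Iio] at hc
        simp only [Set.mem_setOf_eq]
        exact mul_pos_of_neg_of_neg hneg hc
      · apply Set.Infinite.mono ?_ (Set.Ioi_infinite (0 : ℝ))
        intro c hc
        simp only [Set.mem_Ioi] at hc
        simp only [Set.mem_setOf_eq]
        exact mul_pos hpos hc
    have stepA : ∀ v : ℝ, 0 < a * v → ∀ u : ℝ,
        (F n).eval (u + v) = ∑ j ∈ Finset.range (n + 1),
          (n.choose j : ℝ) * (F j).eval u * (F (n - j)).eval v := by
      intro v hv
      have hPQ : (F n).comp (Polynomial.X + Polynomial.C v)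
          = ∑ j ∈ Finset.range (n + 1),
              ((n.choose j : ℝ) * (F (n - j)).eval v) • F j := by
        apply Polynomial.eq_of_infinite_eval_eq
        apply Set.Infinite.mono ?_ hinf
        intro u hu
        simp only [Set.mem_setOf_eq] at hu ⊢
        rw [Polynomial.eval_comp, Polynomial.eval_add, Polynomial.eval_X, Polynomial.eval_C,
          Polynomial.eval_finset_sum, key u v hu hv]
        apply Finset.sum_congr rfl
        intro j hj
        rw [Polynomial.eval_smul, smul_eq_mul]
        ring
      intro u
      have h := congrArg (Polynomial.eval u) hPQ
      rw [Polynomial.eval_comp, Polynomial.eval_add, Polynomial.eval_X, Polynomial.eval_C,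
        Polynomial.eval_finset_sum] at h
      rw [h]
      apply Finset.sum_congr rfl
      intro j hj
      rw [Polynomial.eval_smul, smul_eq_mul]
      ring
    have hPQ2 : (F n).comp (Polynomial.C x + Polynomial.X)
        = ∑ j ∈ Finset.range (n + 1),
            ((n.choose j : ℝ) * (F j).eval x) • F (n - j) := by
      apply Polynomial.eq_of_infinite_eval_eq
      apply Set.Infinite.mono ?_ hinf
      intro v hv
      simp only [Set.mem_setOf_eq] at hv ⊢
      rw [Polynomial.eval_comp, Polynomial.eval_add, Polynomial.eval_X, Polynomial.eval_C,
        Polynomial.eval_finset_sum, stepA v hv x]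
      apply Finset.sum_congr rfl
      intro j hj
      rw [Polynomial.eval_smul, smul_eq_mul]
    have h := congrArg (Polynomial.eval y) hPQ2
    rw [Polynomial.eval_comp, Polynomial.eval_add, Polynomial.eval_X, Polynomial.eval_C,
      Polynomial.eval_finset_sum] at h
    rw [h]
    apply Finset.sum_congr rfl
    intro j hj
    rw [Polynomial.eval_smul, smul_eq_mul]
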